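/- Let α, β, θ > 0, λ ∈ [−1,1], r ∈ ℕ, and z > 0. Then the r-th incomplete moment of the generalized transmuted Weibull distribution satisfies ∫₀^z x^r · θαβ x^{α−1} e^{−βx^α}(1 − e^{−βx^α})^{θ−1}[1 + λ − 2λ(1 − e^{−βx^α})^θ] dx = Σ_{i=0}^∞ (−1)^i [(1+λ)·C(θ−1,i) − 2λ·C(2θ−1,i)] · (θ / (β^{r/α} (i+1)^{r/α + 1})) · ∫₀^{(i+1)β z^α} t^{r/α} e^{−t} dt (the last integral being the lower incomplete gamma function γ(r/α + 1, (i+1)β z^α)). -/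

import Mathlib

open Real MeasureTheory

open Filter Set Topology

set_option maxHeartbeats 2000000

/-- Generalized binomial coefficient `C(a,k) = a(a−1)⋯(a−k+1)/k!`. -/
noncomputable def genChoose (a : ℝ) (k : ℕ) : ℝ :=
  (∏ i ∈ Finset.range k, (a - i)) / (Nat.factorial k)

lemma genChoose_zero (a : ℝ) : genChoose a 0 = 1 := by simp [genChoose]

lemma genChoose_succ (a : ℝ) (k : ℕ) :
    genChoose a (k+1) = genChoose a k * (a - k) / (k+1) := by
  have hk : ((k.factorial : ℝ)) ≠ 0 := Nat.cast_ne_zero.2 k.factorial_ne_zero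
  have hk1 : ((k:ℝ)+1) ≠ 0 := by positivity
  simp only [genChoose, Finset.prod_range_succ, Nat.factorial_succ, Nat.cast_mul,
    Nat.cast_add, Nat.cast_one]
  field_simp

lemma genChoose_succ' (a : ℝ) (k : ℕ) :
    (k+1 : ℝ) * genChoose a (k+1) = genChoose a k * (a - k) := by
  rw [genChoose_succ]; field_simp

lemma genChoose_pascal (a : ℝ) (k : ℕ) :
    genChoose a (k+1) = genChoose (a-1) (k+1) + genChoose (a-1) k := by
  have h1 : ∏ i ∈ Finset.range (k+1), (a - i) = a * ∏ i ∈ Finset.range k, (a - 1 - i) := by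
    rw [Finset.prod_range_succ']
    simp only [Nat.cast_zero, sub_zero]
    rw [mul_comm]
    congr 1
    refine Finset.prod_congr rfl fun i _ => ?_
    push_cast; ring
  have h2 : ∏ i ∈ Finset.range (k+1), (a - 1 - i) =
      (∏ i ∈ Finset.range k, (a - 1 - i)) * (a - 1 - k) := Finset.prod_range_succ _ _
  have hk : ((k.factorial : ℝ)) ≠ 0 := Nat.cast_ne_zero.2 k.factorial_ne_zero
  have hk1 : ((k:ℝ)+1) ≠ 0 := by positivity
  simp only [genChoose, h1, h2, Nat.factorial_succ, Nat.cast_mul, Nat.cast_add, Nat.cast_one]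
  field_simp
  ring

lemma genChoose_shift (a : ℝ) (k : ℕ) :
    (a+1) * genChoose a k = ((k:ℝ)+1) * genChoose (a+1) (k+1) := by
  have h1 : ∏ i ∈ Finset.range (k+1), (a + 1 - i) = (a+1) * ∏ i ∈ Finset.range k, (a - i) := by
    rw [Finset.prod_range_succ']
    simp only [Nat.cast_zero, sub_zero]
    rw [mul_comm]
    congr 1
    refine Finset.prod_congr rfl fun i _ => ?_
    push_cast; ring
  have hk : ((k.factorial : ℝ)) ≠ 0 := Nat.cast_ne_zero.2 k.factorial_ne_zero
  have hk1 : ((k:ℝ)+1) ≠ 0 := by positivity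
  simp only [genChoose, h1, Nat.factorial_succ, Nat.cast_mul, Nat.cast_add, Nat.cast_one]
  field_simp

lemma genChoose_alt_sum (a : ℝ) (n : ℕ) :
    ∑ i ∈ Finset.range (n+1), (-1:ℝ)^i * genChoose a i = (-1)^n * genChoose (a-1) n := by
  induction n with
  | zero => simp [genChoose_zero]
  | succ n ih =>
    rw [Finset.sum_range_succ, ih, genChoose_pascal]
    ring

lemma genChoose_abs_succ_le {a : ℝ} (ha : -1 ≤ a) {k : ℕ} (hk : a ≤ k) :
    |genChoose a (k+1)| ≤ |genChoose a k| := by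
  rw [genChoose_succ, abs_div, abs_mul]
  have h1 : |a - (k:ℝ)| ≤ (k:ℝ)+1 := by
    rw [abs_le]; constructor <;> nlinarith [Nat.cast_nonneg (α := ℝ) k]
  have h2 : |((k:ℝ)+1)| = (k:ℝ)+1 := abs_of_pos (by positivity)
  rw [h2, div_le_iff₀ (by positivity)]
  calc |genChoose a k| * |a - (k:ℝ)| ≤ |genChoose a k| * ((k:ℝ)+1) := by
        exact mul_le_mul_of_nonneg_left h1 (abs_nonneg _)
    _ = _ := by ring

lemma genChoose_abs_le_of_le {a : ℝ} (ha : -1 ≤ a) {n : ℕ} (hn : a ≤ n) (i : ℕ) :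
    |genChoose a (n + i)| ≤ |genChoose a n| := by
  induction i with
  | zero => simp
  | succ i ih =>
    have : a ≤ (n + i : ℕ) := le_trans hn (by exact_mod_cast Nat.cast_le.2 (Nat.le_add_right n i))
    calc |genChoose a ((n+i)+1)| ≤ |genChoose a (n+i)| := genChoose_abs_succ_le ha this
      _ ≤ _ := ih

lemma genChoose_bounded (a : ℝ) (ha : -1 ≤ a) :
    ∃ B : ℝ, 0 ≤ B ∧ ∀ i, |genChoose a i| ≤ B := by
  set n := ⌈a⌉₊ with hn
  have han : a ≤ n := Nat.le_ceil a
  refine ⟨∑ j ∈ Finset.range (n+1), |genChoose a j|, Finset.sum_nonneg fun j _ => abs_nonneg _, ?_⟩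
  intro i
  rcases le_or_gt i n with h | h
  · exact Finset.single_le_sum (f := fun j => |genChoose a j|) (fun j _ => abs_nonneg _)
      (Finset.mem_range.2 (Nat.lt_succ_of_le h))
  · have : |genChoose a i| ≤ |genChoose a n| := by
      have := genChoose_abs_le_of_le ha han (i - n)
      rwa [Nat.add_sub_cancel' h.le] at this
    exact this.trans (Finset.single_le_sum (f := fun j => |genChoose a j|)
      (fun j _ => abs_nonneg _) (Finset.mem_range.2 (Nat.lt_succ_of_le le_rfl)))

lemma genChoose_sign {b : ℝ} (hb : 0 < b) :
    ∀ i, ⌈b⌉₊ ≤ i → |genChoose b i| = (-1)^(i + ⌈b⌉₊) * genChoose b i := by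
  set N := ⌈b⌉₊ with hN
  have hbN : b ≤ N := Nat.le_ceil b
  have base : 0 < genChoose b N := by
    have : ∀ j ∈ Finset.range N, 0 < b - (j:ℝ) := by
      intro j hj
      have hj' : (j:ℝ) < b := by
        have : (j:ℝ) ≤ (N:ℝ) - 1 := by
          have := Finset.mem_range.1 hj
          have : (j:ℝ) + 1 ≤ (N:ℝ) := by exact_mod_cast this
          linarith
        have hlt : (N:ℝ) - 1 < b := by
          have := Nat.ceil_lt_add_one (le_of_lt hb)
          rw [← hN] at this
          linarith
        linarith
      linarith
    exact div_pos (Finset.prod_pos this) (by exact_mod_cast Nat.pos_of_ne_zero N.factorial_ne_zero)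
  intro i hi
  induction i with
  | zero =>
    have : N = 0 := Nat.le_zero.1 hi
    rw [this] at base ⊢
    simp [abs_of_pos base]
  | succ i ih =>
    rcases Nat.lt_or_ge N (i+1) with h | h
    · have hNi : N ≤ i := Nat.lt_succ_iff.1 h
      have ihe := ih hNi
      have hbi : b - (i:ℝ) ≤ 0 := by
        have : b ≤ (i:ℝ) := le_trans hbN (by exact_mod_cast hNi)
        linarith
      rw [genChoose_succ, abs_div, abs_mul, ihe, abs_of_nonpos hbi,
        abs_of_pos (show (0:ℝ) < (i:ℝ)+1 by positivity)]
      rw [pow_add, pow_add, pow_succ]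
      ring
    · have hEq : N = i + 1 := le_antisymm hi h
      rw [hEq] at base ⊢
      rw [show (i+1) + (i+1) = 2*(i+1) by ring, pow_mul]
      simp [abs_of_pos base]

lemma genChoose_abs_summable {b : ℝ} (hb : 0 < b) :
    Summable (fun i => |genChoose b i|) := by
  obtain ⟨B, hB0, hB⟩ := genChoose_bounded (b-1) (by linarith)
  set N := ⌈b⌉₊ with hN
  have hN1 : 1 ≤ N := Nat.ceil_pos.2 hb
  have halt : ∀ m : ℕ, 1 ≤ m → |∑ i ∈ Finset.range m, (-1:ℝ)^i * genChoose b i| ≤ B := by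
    intro m hm
    obtain ⟨k, rfl⟩ := Nat.exists_eq_add_of_le hm
    rw [add_comm 1 k, genChoose_alt_sum, abs_mul, abs_pow, abs_neg, abs_one, one_pow, one_mul]
    exact hB k
  have htail : ∀ n, N ≤ n → ∑ i ∈ Finset.Ico N n, |genChoose b i| ≤ 2*B := by
    intro n hn
    have h1 : ∑ i ∈ Finset.Ico N n, |genChoose b i|
        = (-1:ℝ)^N * ∑ i ∈ Finset.Ico N n, (-1:ℝ)^i * genChoose b i := by
      rw [Finset.mul_sum]
      refine Finset.sum_congr rfl fun i hi => ?_
      have hiN : N ≤ i := (Finset.mem_Ico.1 hi).1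
      rw [genChoose_sign hb i hiN, pow_add]
      ring
    have h2 : ∑ i ∈ Finset.Ico N n, (-1:ℝ)^i * genChoose b i
        = (∑ i ∈ Finset.range n, (-1:ℝ)^i * genChoose b i)
          - ∑ i ∈ Finset.range N, (-1:ℝ)^i * genChoose b i := by
      rw [Finset.sum_Ico_eq_sub _ hn]
    calc ∑ i ∈ Finset.Ico N n, |genChoose b i|
        = (-1:ℝ)^N * ∑ i ∈ Finset.Ico N n, (-1:ℝ)^i * genChoose b i := h1
      _ ≤ |(-1:ℝ)^N * ∑ i ∈ Finset.Ico N n, (-1:ℝ)^i * genChoose b i| := le_abs_self _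
      _ = |∑ i ∈ Finset.Ico N n, (-1:ℝ)^i * genChoose b i| := by
          rw [abs_mul, abs_pow, abs_neg, abs_one, one_pow, one_mul]
      _ ≤ |∑ i ∈ Finset.range n, (-1:ℝ)^i * genChoose b i|
          + |∑ i ∈ Finset.range N, (-1:ℝ)^i * genChoose b i| := by
          rw [h2]; exact abs_sub _ _
      _ ≤ B + B := add_le_add (halt n (le_trans hN1 hn)) (halt N hN1)
      _ = 2*B := by ring
  apply summable_of_sum_range_le (c := (∑ j ∈ Finset.range N, |genChoose b j|) + 2*B)
    (fun n => abs_nonneg _)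
  intro n
  rcases le_or_gt n N with h | h
  · have h1 : ∑ i ∈ Finset.range n, |genChoose b i| ≤ ∑ j ∈ Finset.range N, |genChoose b j| :=
      Finset.sum_le_sum_of_subset_of_nonneg
        (Finset.range_subset_range.2 h) (fun j _ _ => abs_nonneg _)
    linarith
  · have := Finset.sum_range_add_sum_Ico (fun i => |genChoose b i|) h.le
    have h2 := htail n h.le
    linarith

lemma genChoose_div_summable {b : ℝ} (hb : 0 < b) :
    Summable (fun i : ℕ => |genChoose (b-1) i| / ((i:ℝ)+1)) := by
  have h0 : Summable (fun i : ℕ => |genChoose b i|) := genChoose_abs_summable hb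
  have h1 : Summable (fun i : ℕ => |genChoose b (i+1)|) := by
    have := (summable_nat_add_iff (f := fun i : ℕ => |genChoose b i|) 1).2 h0
    exact this
  have h2 : Summable (fun i : ℕ => |genChoose b (i+1)| / b) := h1.div_const b
  refine h2.congr fun i => ?_
  have hsh := genChoose_shift (b-1) i
  rw [sub_add_cancel] at hsh
  have hi1 : (0:ℝ) < (i:ℝ)+1 := by positivity
  have heq : genChoose (b-1) i = ((i:ℝ)+1) * genChoose b (i+1) / b := by
    rw [eq_div_iff hb.ne', mul_comm (genChoose (b-1) i) b, hsh]
  rw [heq, abs_div, abs_mul, abs_of_pos hi1, abs_of_pos hb]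
  field_simp

lemma binomial_hasSum {a u : ℝ} (ha : -1 ≤ a) (hu0 : 0 < u) (hu1 : u < 1) :
    HasSum (fun i : ℕ => genChoose a i * (-u)^i) ((1-u)^a) := by
  obtain ⟨B, hB0, hB⟩ := genChoose_bounded a ha
  set K : ℝ := max ((1-u)^(a-1)) 1 with hK
  have hK0 : 0 ≤ K := le_trans zero_le_one (le_max_right _ _)
  set f : ℝ → ℝ := fun t => (1-t)^a with hfdef
  set s : Set ℝ := Set.Icc 0 u with hsdef
  have hus : UniqueDiffOn ℝ s := uniqueDiffOn_Icc hu0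
  have hmem : ∀ t ∈ s, (0:ℝ) < 1 - t := by
    intro t ht
    have h2 := ht.2
    linarith
  -- iterated derivatives of f
  have hiter : ∀ n : ℕ, ∀ t ∈ s, iteratedDerivWithin n f s t
      = (∏ j ∈ Finset.range n, (a - j)) * (-1)^n * (1-t)^(a - n) := by
    intro n
    induction n with
    | zero => intro t ht; simp [f]
    | succ n ih =>
      intro t ht
      rw [iteratedDerivWithin_succ]
      have hcongr : derivWithin (iteratedDerivWithin n f s) s t
          = derivWithin (fun t => (∏ j ∈ Finset.range n, (a - j)) * (-1)^n * (1-t)^(a - n)) s t :=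
        derivWithin_congr (fun y hy => ih y hy) (ih t ht)
      rw [hcongr]
      have h1 : HasDerivAt (fun t : ℝ => 1 - t) (-1) t := by
        simpa using (hasDerivAt_id t).const_sub 1
      have h2 := (h1.rpow_const (p := a - n) (Or.inl (hmem t ht).ne')).const_mul
        ((∏ j ∈ Finset.range n, (a - j)) * (-1)^n)
      rw [h2.hasDerivWithinAt.derivWithin (hus t ht)]
      rw [Finset.prod_range_succ]
      push_cast
      rw [show a - ((n:ℝ)+1) = a - (n:ℝ) - 1 by ring]
      ring
  have hcont : ∀ m : ℕ, ContDiffOn ℝ m f s := by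
    intro m
    exact ContDiffOn.rpow_const_of_ne (contDiffOn_const.sub contDiffOn_id)
      (fun t ht => (hmem t ht).ne')
  -- Taylor remainder estimate
  have key : ∀ n : ℕ, |(1-u)^a - ∑ i ∈ Finset.range (n+1), genChoose a i * (-u)^i|
      ≤ ((n:ℝ)+1) * B * u^(n+1) * K := by
    intro n
    have hdiff : DifferentiableOn ℝ (iteratedDerivWithin n f s) (Set.Ioo 0 u) := by
      have := (hcont (n+1)).differentiableOn_iteratedDerivWithin
        (m := n) (by exact_mod_cast Nat.lt_succ_self n) hus
      exact this.mono Set.Ioo_subset_Icc_self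
    have huI : Set.uIcc (0:ℝ) u = s := Set.uIcc_of_le hu0.le
    have huO : Set.uIoo (0:ℝ) u = Set.Ioo 0 u := Set.uIoo_of_le hu0.le
    obtain ⟨ξ, hξ, hrem⟩ := taylor_mean_remainder_cauchy (f := f) (x₀ := 0) (x := u) (n := n)
      hu0.ne (by rw [huI]; exact hcont n) (by rw [huI, huO]; exact hdiff)
    rw [huO] at hξ
    rw [huI] at hrem
    have hξs : ξ ∈ s := Set.Ioo_subset_Icc_self hξ
    have hξ0 : 0 < ξ := hξ.1
    have hξu : ξ < u := hξ.2
    have h1ξ : 0 < 1 - ξ := by linarith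
    have htay : taylorWithinEval f n s 0 u = ∑ i ∈ Finset.range (n+1), genChoose a i * (-u)^i := by
      rw [taylor_within_apply]
      refine Finset.sum_congr rfl fun k hk => ?_
      rw [hiter k 0 (Set.left_mem_Icc.2 hu0.le)]
      have hfact : ((k.factorial : ℝ)) ≠ 0 := Nat.cast_ne_zero.2 k.factorial_ne_zero
      simp only [smul_eq_mul, sub_zero, Real.one_rpow]
      rw [neg_pow]
      unfold genChoose
      field_simp
      ring
    rw [htay] at hrem
    rw [hrem, hiter (n+1) ξ hξs]
    have hb1 : (u - ξ)^n ≤ u^n * (1-ξ)^n := by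
      rw [← mul_pow]
      apply pow_le_pow_left₀ (by linarith) (by nlinarith)
    have hb3 : (1-ξ)^(a-1) ≤ K := by
      rcases le_or_gt 0 (a-1) with h | h
      · exact le_trans (Real.rpow_le_one (by linarith) (by linarith) h) (le_max_right _ _)
      · exact le_trans (Real.rpow_le_rpow_of_nonpos (by linarith) (by linarith) h.le)
          (le_max_left _ _)
    have hQle : (1-ξ)^(a - ((n:ℕ)+1:ℕ)) * (u-ξ)^n ≤ u^n * K := by
      calc (1-ξ)^(a - ((n:ℕ)+1:ℕ)) * (u-ξ)^n
          ≤ (1-ξ)^(a - ((n:ℕ)+1:ℕ)) * (u^n * (1-ξ)^n) := by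
            exact mul_le_mul_of_nonneg_left hb1 (Real.rpow_nonneg h1ξ.le _)
        _ = ((1-ξ)^(a - ((n:ℕ)+1:ℕ)) * (1-ξ)^(n:ℝ)) * u^n := by
            rw [Real.rpow_natCast]; ring
        _ = (1-ξ)^(a-1) * u^n := by
            rw [← Real.rpow_add h1ξ]
            congr 1
            push_cast
            ring
        _ ≤ K * u^n := mul_le_mul_of_nonneg_right hb3 (pow_nonneg hu0.le n)
        _ = u^n * K := by ring
    have hgc : |∏ j ∈ Finset.range (n+1), (a - j)| / (n.factorial : ℝ)
        = ((n:ℝ)+1) * |genChoose a (n+1)| := by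
      unfold genChoose
      rw [abs_div, abs_of_pos (show (0:ℝ) < ((n+1).factorial : ℝ) by positivity)]
      rw [Nat.factorial_succ]
      push_cast
      have h1 : ((n.factorial : ℝ)) ≠ 0 := Nat.cast_ne_zero.2 n.factorial_ne_zero
      field_simp
    have hPB : |∏ j ∈ Finset.range (n+1), (a - j)| / (n.factorial : ℝ) ≤ ((n:ℝ)+1) * B := by
      rw [hgc]
      exact mul_le_mul_of_nonneg_left (hB (n+1)) (by positivity)
    calc |(∏ j ∈ Finset.range (n+1), (a - j)) * (-1)^(n+1) * (1-ξ)^(a - ((n:ℕ)+1:ℕ))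
            * (u - ξ)^n / (n.factorial:ℝ) * (u - 0)|
        = (|∏ j ∈ Finset.range (n+1), (a - j)| / (n.factorial:ℝ))
            * ((1-ξ)^(a - ((n:ℕ)+1:ℕ)) * (u - ξ)^n) * u := by
          rw [sub_zero]
          simp only [abs_mul, abs_div, abs_pow, abs_neg, abs_one, one_pow, mul_one]
          rw [abs_of_nonneg (Real.rpow_nonneg h1ξ.le _),
            abs_of_nonneg (by linarith : (0:ℝ) ≤ u - ξ), abs_of_pos hu0, Nat.abs_cast]
          ring
      _ ≤ (((n:ℝ)+1) * B) * (u^n * K) * u := by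
          apply mul_le_mul_of_nonneg_right _ hu0.le
          apply mul_le_mul hPB hQle
          · exact mul_nonneg (Real.rpow_nonneg h1ξ.le _) (pow_nonneg (by linarith) n)
          · exact mul_nonneg (by positivity) hB0
      _ = ((n:ℝ)+1) * B * u^(n+1) * K := by rw [pow_succ]; ring
  -- summability
  have hsum : Summable (fun i : ℕ => genChoose a i * (-u)^i) := by
    apply Summable.of_norm_bounded (g := fun i => B * u^i)
      ((summable_geometric_of_lt_one hu0.le hu1).mul_left B)
    intro i
    rw [Real.norm_eq_abs, abs_mul, abs_pow, abs_neg, abs_of_pos hu0]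
    exact mul_le_mul_of_nonneg_right (hB i) (pow_nonneg hu0.le i)
  -- limit of the bound
  have hS1 : Summable (fun n : ℕ => ((n:ℝ)+1) * u^n) := by
    have h1 := summable_pow_mul_geometric_of_norm_lt_one 1
      (r := u) (by rw [Real.norm_eq_abs, abs_of_pos hu0]; exact hu1)
    have h2 : Summable (fun n : ℕ => u^n) := summable_geometric_of_lt_one hu0.le hu1
    have := h1.add h2
    refine this.congr fun n => ?_
    simp [pow_one]
    ring
  have hD0 : Tendsto (fun n : ℕ => ((n:ℝ)+1) * B * u^(n+1) * K) atTop (𝓝 0) := by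
    have h1 := (hS1.mul_left (B * K * u)).tendsto_atTop_zero
    refine h1.congr fun n => ?_
    rw [pow_succ]
    ring
  have h2 : Tendsto (fun n : ℕ => ∑ i ∈ Finset.range (n+1), genChoose a i * (-u)^i)
      atTop (𝓝 ((1-u)^a)) := by
    rw [tendsto_iff_dist_tendsto_zero]
    apply squeeze_zero (fun n => dist_nonneg) _ hD0
    intro n
    rw [Real.dist_eq, abs_sub_comm]
    exact key n
  have h3 : Tendsto (fun n : ℕ => ∑ i ∈ Finset.range (n+1), genChoose a i * (-u)^i)
      atTop (𝓝 (∑' i, genChoose a i * (-u)^i)) :=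
    hsum.hasSum.tendsto_sum_nat.comp (tendsto_add_atTop_nat 1)
  have := tendsto_nhds_unique h3 h2
  exact this ▸ hsum.hasSum

lemma key_integral {α z : ℝ} (hα : 0 < α) (hz : 0 < z) (r : ℕ) {c : ℝ} (hc : 0 < c) :
    ∫ x in Set.Ioc (0:ℝ) z, α * x^(α-1) * (x^r * Real.exp (-(c * x^α)))
      = (c ^ ((r:ℝ)/α + 1))⁻¹ *
        ∫ t in Set.Ioc (0:ℝ) (c * z^α), t^((r:ℝ)/α) * Real.exp (-t) := by
  set M : ℝ := c * z^α with hM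
  have hM0 : 0 < M := mul_pos hc (rpow_pos_of_pos hz α)
  set G : ℝ → ℝ := Set.indicator (Set.Ioc 0 M) (fun t => t^((r:ℝ)/α) * Real.exp (-t)) with hG
  have step1 : ∫ x in Set.Ioi (0:ℝ), (|α| * x^(α-1)) • G (c * x^α)
      = ∫ y in Set.Ioi (0:ℝ), G (c * y) :=
    integral_comp_rpow_Ioi (fun y => G (c * y)) hα.ne'
  have step2 : ∫ y in Set.Ioi (0:ℝ), G (c * y) = c⁻¹ • ∫ y in Set.Ioi (0:ℝ), G y := by
    have := integral_comp_mul_left_Ioi G 0 hc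
    rw [mul_zero] at this
    exact this
  have step3 : ∫ y in Set.Ioi (0:ℝ), G y
      = ∫ t in Set.Ioc (0:ℝ) M, t^((r:ℝ)/α) * Real.exp (-t) := by
    rw [hG, setIntegral_indicator measurableSet_Ioc,
      Set.inter_eq_self_of_subset_right Set.Ioc_subset_Ioi_self]
  have step4 : ∀ x ∈ Set.Ioi (0:ℝ), (|α| * x^(α-1)) • G (c * x^α)
      = Set.indicator (Set.Ioc 0 z)
          (fun x => c^((r:ℝ)/α) * (α * x^(α-1) * (x^r * Real.exp (-(c * x^α))))) x := by
    intro x hx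
    have hx0 : (0:ℝ) < x := hx
    have hxa : (0:ℝ) < x^α := rpow_pos_of_pos hx0 α
    rcases le_or_gt x z with hxz | hxz
    · have hmem : c * x^α ∈ Set.Ioc (0:ℝ) M := by
        constructor
        · positivity
        · exact mul_le_mul_of_nonneg_left (rpow_le_rpow hx0.le hxz hα.le) hc.le
      rw [hG, Set.indicator_of_mem hmem, Set.indicator_of_mem (by exact ⟨hx0, hxz⟩)]
      have hpow : (c * x^α) ^ ((r:ℝ)/α) = c^((r:ℝ)/α) * x^r := by
        rw [Real.mul_rpow hc.le hxa.le, ← Real.rpow_natCast x r,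
          ← Real.rpow_mul hx0.le]
        congr 2
        field_simp
      rw [smul_eq_mul, hpow, abs_of_pos hα]
      ring
    · have hnot : c * x^α ∉ Set.Ioc (0:ℝ) M := by
        intro h
        have := h.2
        have hlt : z^α < x^α := rpow_lt_rpow hz.le hxz hα
        nlinarith
      rw [hG, Set.indicator_of_notMem hnot, Set.indicator_of_notMem (by
        intro h; exact absurd h.2 (not_le.2 hxz)), smul_zero]
  have step5 : ∫ x in Set.Ioi (0:ℝ), (|α| * x^(α-1)) • G (c * x^α)
      = c^((r:ℝ)/α) * ∫ x in Set.Ioc (0:ℝ) z, α * x^(α-1) * (x^r * Real.exp (-(c * x^α))) := by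
    rw [setIntegral_congr_fun measurableSet_Ioi step4,
      setIntegral_indicator measurableSet_Ioc,
      Set.inter_eq_self_of_subset_right Set.Ioc_subset_Ioi_self, integral_const_mul]
  have hcr : (0:ℝ) < c^((r:ℝ)/α) := rpow_pos_of_pos hc _
  have hfin : c^((r:ℝ)/α) * ∫ x in Set.Ioc (0:ℝ) z, α * x^(α-1) * (x^r * Real.exp (-(c * x^α)))
      = c⁻¹ * ∫ t in Set.Ioc (0:ℝ) M, t^((r:ℝ)/α) * Real.exp (-t) := by
    rw [← step5, step1, step2, step3, smul_eq_mul]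
  have hexp : c ^ ((r:ℝ)/α + 1) = c^((r:ℝ)/α) * c := by
    rw [Real.rpow_add hc, Real.rpow_one]
  rw [hexp]
  rw [mul_inv]
  field_simp at hfin ⊢
  linarith [hfin]

lemma integrable_aux {αe z c : ℝ} (hα : 0 < αe) (hz : 0 < z) (hc : 0 ≤ c) (r : ℕ) :
    IntegrableOn (fun x => αe * x^(αe-1) * (x^r * Real.exp (-(c * x^αe)))) (Set.Ioc (0:ℝ) z) := by
  have hbase : IntegrableOn (fun x : ℝ => x^(αe-1)) (Set.Ioc (0:ℝ) z) := by
    have h := intervalIntegral.intervalIntegrable_rpow' (a := 0) (b := z)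
      (by linarith : (-1:ℝ) < αe - 1)
    rwa [intervalIntegrable_iff_integrableOn_Ioc_of_le hz.le] at h
  have hbase2 : IntegrableOn (fun x : ℝ => (αe * z^r) * x^(αe-1)) (Set.Ioc (0:ℝ) z) :=
    hbase.const_mul _
  apply Integrable.mono hbase2
  · apply Measurable.aestronglyMeasurable
    fun_prop
  · rw [ae_restrict_iff' measurableSet_Ioc]
    apply Filter.Eventually.of_forall
    intro x hx
    have hx0 : (0:ℝ) < x := hx.1
    have hxz : x ≤ z := hx.2
    have h1 : Real.exp (-(c * x^αe)) ≤ 1 := by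
      rw [Real.exp_le_one_iff]
      have : (0:ℝ) ≤ c * x^αe := mul_nonneg hc (rpow_pos_of_pos hx0 αe).le
      linarith
    have h2 : x^r ≤ z^r := pow_le_pow_left₀ hx0.le hxz r
    have h3 : (0:ℝ) < x^(αe-1) := rpow_pos_of_pos hx0 _
    rw [Real.norm_eq_abs, Real.norm_eq_abs]
    rw [abs_of_nonneg (by positivity), abs_of_nonneg (by positivity)]
    calc αe * x^(αe-1) * (x^r * Real.exp (-(c * x^αe)))
        ≤ αe * x^(αe-1) * (z^r * 1) := by
          apply mul_le_mul_of_nonneg_left _ (by positivity)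
          exact mul_le_mul h2 h1 (Real.exp_pos _).le (by positivity)
      _ = (αe * z^r) * x^(αe-1) := by ring

/-- The `r`-th incomplete moment of the generalized transmuted Weibull distribution:
`∫₀^z x^r f(x) dx = Σ_{i=0}^∞ (−1)^i [(1+λ)C(θ−1,i) − 2λC(2θ−1,i)]
  (θ/(β^{r/α}(i+1)^{r/α+1})) γ(r/α + 1, (i+1)βz^α)`. -/
theorem gtw_incomplete_moment (α β θ lam z : ℝ) (r : ℕ)
    (hα : 0 < α) (hβ : 0 < β) (hθ : 0 < θ)
    (hlam : lam ∈ Set.Icc (-1 : ℝ) 1) (hz : 0 < z) :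
    ∫ x in Set.Ioc (0 : ℝ) z,
        x ^ r *
          (θ * α * β * x ^ (α - 1) * Real.exp (-β * x ^ α) *
            (1 - Real.exp (-β * x ^ α)) ^ (θ - 1) *
            (1 + lam - 2 * lam * (1 - Real.exp (-β * x ^ α)) ^ θ)) =
      ∑' i : ℕ,
        (-1 : ℝ) ^ i *
          ((1 + lam) * genChoose (θ - 1) i - 2 * lam * genChoose (2 * θ - 1) i) *
          (θ / (β ^ ((r : ℝ) / α) * ((i : ℝ) + 1) ^ ((r : ℝ) / α + 1))) *
          ∫ t in Set.Ioc (0 : ℝ) (((i : ℝ) + 1) * β * z ^ α),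
            t ^ ((r : ℝ) / α) * Real.exp (-t) := by
  have hlam1 : -1 ≤ lam := hlam.1
  have hlam2 : lam ≤ 1 := hlam.2
  set coef : ℕ → ℝ := fun i =>
    (-1:ℝ)^i * ((1 + lam) * genChoose (θ - 1) i - 2 * lam * genChoose (2 * θ - 1) i) with hcoef
  set F : ℕ → ℝ → ℝ := fun i x =>
    coef i * (θ * β * (α * x^(α-1) * (x^r * Real.exp (-((((i:ℝ)+1) * β) * x^α))))) with hF
  have hci : ∀ i : ℕ, (0:ℝ) < ((i:ℝ)+1) * β := fun i => by positivity
  -- pointwise expansion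
  have hpt : ∀ x ∈ Set.Ioc (0:ℝ) z,
      x ^ r * (θ * α * β * x ^ (α - 1) * Real.exp (-β * x ^ α) *
        (1 - Real.exp (-β * x ^ α)) ^ (θ - 1) *
        (1 + lam - 2 * lam * (1 - Real.exp (-β * x ^ α)) ^ θ))
      = ∑' i, F i x := by
    intro x hx
    have hx0 : (0:ℝ) < x := hx.1
    set u : ℝ := Real.exp (-β * x ^ α) with hu
    have hu0 : 0 < u := Real.exp_pos _
    have hu1 : u < 1 := by
      rw [hu, Real.exp_lt_one_iff]
      have : (0:ℝ) < x ^ α := rpow_pos_of_pos hx0 α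
      nlinarith
    have h1u : (0:ℝ) < 1 - u := by linarith
    have hA := binomial_hasSum (a := θ - 1) (by linarith) hu0 hu1
    have hB := binomial_hasSum (a := 2*θ - 1) (by linarith) hu0 hu1
    have hcomb := ((hA.mul_left (1 + lam)).sub (hB.mul_left (2 * lam))).mul_left
      (x ^ r * (θ * α * β * x ^ (α-1) * u))
    have hval : x ^ r * (θ * α * β * x ^ (α-1) * u) *
        ((1 + lam) * (1-u)^(θ-1) - 2 * lam * (1-u)^(2*θ-1))
        = x ^ r * (θ * α * β * x ^ (α - 1) * u *
          (1 - u) ^ (θ - 1) * (1 + lam - 2 * lam * (1 - u) ^ θ)) := by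
      have h2 : (1-u)^(2*θ-1) = (1-u)^(θ-1) * (1-u)^θ := by
        rw [← Real.rpow_add h1u]
        congr 1
        ring
      rw [h2]
      ring
    have hterm : ∀ i : ℕ, x ^ r * (θ * α * β * x ^ (α-1) * u) *
        ((1 + lam) * (genChoose (θ-1) i * (-u)^i) - 2 * lam * (genChoose (2*θ-1) i * (-u)^i))
        = F i x := by
      intro i
      have hexp : u ^ (i+1) = Real.exp (-((((i:ℝ)+1) * β) * x^α)) := by
        rw [hu, ← Real.exp_nat_mul]
        congr 1
        push_cast
        ring
      rw [hF]
      simp only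
      rw [← hexp, hcoef]
      simp only
      rw [neg_pow u i]
      rw [pow_succ]
      ring
    rw [hval] at hcomb
    have hfun : (fun i => x ^ r * (θ * α * β * x ^ (α-1) * u) *
        ((1 + lam) * (genChoose (θ-1) i * (-u)^i) - 2 * lam * (genChoose (2*θ-1) i * (-u)^i)))
        = fun i => F i x := funext hterm
    rw [hfun] at hcomb
    exact hcomb.tsum_eq.symm
  -- integrability of each term
  have hFi_int : ∀ i : ℕ, IntegrableOn (F i) (Set.Ioc (0:ℝ) z) := by
    intro i
    have := ((integrable_aux hα hz (hci i).le r).const_mul (θ * β)).const_mul (coef i)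
    exact this
  -- value of each integral
  have hFi_val : ∀ i : ℕ, ∫ x in Set.Ioc (0:ℝ) z, F i x
      = coef i * (θ * β * (((((i:ℝ)+1) * β) ^ ((r:ℝ)/α + 1))⁻¹ *
          ∫ t in Set.Ioc (0:ℝ) ((((i:ℝ)+1) * β) * z^α), t^((r:ℝ)/α) * Real.exp (-t))) := by
    intro i
    rw [hF]
    simp only
    rw [integral_const_mul, integral_const_mul, key_integral hα hz r (hci i)]
  -- summable bound
  have hΓ_int : IntegrableOn (fun t : ℝ => t^((r:ℝ)/α) * Real.exp (-t)) (Set.Ioi (0:ℝ)) := by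
    have h := Real.GammaIntegral_convergent (s := (r:ℝ)/α + 1) (by positivity)
    refine h.congr_fun ?_ measurableSet_Ioi
    intro t ht
    rw [show (r:ℝ)/α + 1 - 1 = (r:ℝ)/α by ring]
    ring
  set Γ0 : ℝ := ∫ t in Set.Ioi (0:ℝ), t^((r:ℝ)/α) * Real.exp (-t) with hΓ0
  have hΓ0_nonneg : 0 ≤ Γ0 :=
    setIntegral_nonneg measurableSet_Ioi fun t ht =>
      mul_nonneg (rpow_nonneg (le_of_lt ht) _) (Real.exp_pos _).le
  have hγ : ∀ i : ℕ, (0:ℝ) ≤ (∫ t in Set.Ioc (0:ℝ) ((((i:ℝ)+1) * β) * z^α),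
      t^((r:ℝ)/α) * Real.exp (-t)) ∧
      (∫ t in Set.Ioc (0:ℝ) ((((i:ℝ)+1) * β) * z^α), t^((r:ℝ)/α) * Real.exp (-t)) ≤ Γ0 := by
    intro i
    constructor
    · exact setIntegral_nonneg measurableSet_Ioc fun t ht =>
        mul_nonneg (rpow_nonneg (le_of_lt ht.1) _) (Real.exp_pos _).le
    · apply setIntegral_mono_set hΓ_int
      · filter_upwards [ae_restrict_mem measurableSet_Ioi] with t ht
        exact mul_nonneg (rpow_nonneg (le_of_lt ht) _) (Real.exp_pos _).le
      · exact HasSubset.Subset.eventuallyLE Set.Ioc_subset_Ioi_self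
  -- coefficient bound
  have hcoef_b : ∀ i, |coef i| ≤
      (1+lam) * |genChoose (θ-1) i| + 2*|lam| * |genChoose (2*θ-1) i| := by
    intro i
    rw [hcoef]
    simp only
    rw [abs_mul, abs_pow, abs_neg, abs_one, one_pow, one_mul]
    calc |(1 + lam) * genChoose (θ - 1) i - 2 * lam * genChoose (2 * θ - 1) i|
        ≤ |(1 + lam) * genChoose (θ - 1) i| + |2 * lam * genChoose (2 * θ - 1) i| := abs_sub _ _
      _ = (1+lam) * |genChoose (θ-1) i| + 2*|lam| * |genChoose (2*θ-1) i| := by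
          rw [abs_mul, abs_mul, abs_of_nonneg (by linarith : (0:ℝ) ≤ 1 + lam),
            abs_mul, abs_two]
  set s : ℝ := (r:ℝ)/α + 1 with hs
  have hs1 : (1:ℝ) ≤ s := by
    rw [hs]
    have : (0:ℝ) ≤ (r:ℝ)/α := by positivity
    linarith
  -- bound on integrals of |F i|
  have hbound : ∀ i, (∫ x in Set.Ioc (0:ℝ) z, |F i x|)
      ≤ (θ * β * (β^s)⁻¹ * Γ0) * (|coef i| / ((i:ℝ)+1)) := by
    intro i
    have habs : ∀ x ∈ Set.Ioc (0:ℝ) z, |F i x|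
        = |coef i| * (θ * β * (α * x^(α-1) * (x^r * Real.exp (-((((i:ℝ)+1) * β) * x^α))))) := by
      intro x hx
      have hx0 : (0:ℝ) < x := hx.1
      rw [hF]
      simp only
      rw [abs_mul]
      congr 1
      have h1 : (0:ℝ) < x^(α-1) := rpow_pos_of_pos hx0 _
      have h2 : (0:ℝ) < x^r := pow_pos hx0 r
      exact abs_of_nonneg (by positivity)
    rw [setIntegral_congr_fun measurableSet_Ioc habs, integral_const_mul, integral_const_mul,
      key_integral hα hz r (hci i)]
    set γ : ℝ := ∫ t in Set.Ioc (0:ℝ) ((((i:ℝ)+1) * β) * z^α),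
      t^((r:ℝ)/α) * Real.exp (-t) with hγdef
    have hγ1 : 0 ≤ γ := (hγ i).1
    have hγ2 : γ ≤ Γ0 := (hγ i).2
    have hinv : (((((i:ℝ)+1) * β))^s)⁻¹ ≤ (β^s)⁻¹ * (((i:ℝ)+1))⁻¹ := by
      rw [Real.mul_rpow (by positivity) hβ.le, mul_inv]
      rw [mul_comm]
      apply mul_le_mul_of_nonneg_left _ (by positivity)
      apply inv_anti₀ (by positivity)
      calc ((i:ℝ)+1) = ((i:ℝ)+1)^(1:ℝ) := (Real.rpow_one _).symm
        _ ≤ ((i:ℝ)+1)^s := Real.rpow_le_rpow_of_exponent_le (by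
            have : (0:ℝ) ≤ (i:ℝ) := Nat.cast_nonneg i
            linarith) hs1
    have hstep : (((((i:ℝ)+1) * β))^s)⁻¹ * γ ≤ ((β^s)⁻¹ * (((i:ℝ)+1))⁻¹) * Γ0 := by
      apply mul_le_mul hinv hγ2 hγ1
      positivity
    calc |coef i| * (θ * β * ((((((i:ℝ)+1) * β))^s)⁻¹ * γ))
        ≤ |coef i| * (θ * β * (((β^s)⁻¹ * (((i:ℝ)+1))⁻¹) * Γ0)) := by
          apply mul_le_mul_of_nonneg_left _ (abs_nonneg _)
          apply mul_le_mul_of_nonneg_left hstep (by positivity)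
      _ = (θ * β * (β^s)⁻¹ * Γ0) * (|coef i| / ((i:ℝ)+1)) := by
          rw [div_eq_mul_inv]
          ring
  -- summability of the majorant
  have hmaj : Summable (fun i : ℕ => |coef i| / ((i:ℝ)+1)) := by
    have h1 : Summable (fun i : ℕ => |genChoose (θ-1) i| / ((i:ℝ)+1)) :=
      genChoose_div_summable hθ
    have h2 : Summable (fun i : ℕ => |genChoose (2*θ-1) i| / ((i:ℝ)+1)) := by
      exact genChoose_div_summable (b := 2*θ) (by linarith)
    refine Summable.of_nonneg_of_le
      (fun i => div_nonneg (abs_nonneg _) (by positivity : (0:ℝ) ≤ (i:ℝ)+1))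
      (fun i => ?_) ((h1.mul_left (1+lam)).add (h2.mul_left (2*|lam|)))
    rw [div_le_iff₀ (by positivity : (0:ℝ) < (i:ℝ)+1)]
    calc |coef i| ≤ (1+lam) * |genChoose (θ-1) i| + 2*|lam| * |genChoose (2*θ-1) i| := hcoef_b i
      _ = ((1+lam) * (|genChoose (θ-1) i| / ((i:ℝ)+1))
          + 2*|lam| * (|genChoose (2*θ-1) i| / ((i:ℝ)+1))) * ((i:ℝ)+1) := by
          field_simp
  have hmaj2 : Summable (fun i : ℕ => (θ * β * (β^s)⁻¹ * Γ0) * (|coef i| / ((i:ℝ)+1))) :=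
    hmaj.mul_left _
  -- measurability
  have hFm : ∀ i : ℕ, AEStronglyMeasurable (F i) (volume.restrict (Set.Ioc (0:ℝ) z)) := by
    intro i
    apply Measurable.aestronglyMeasurable
    rw [hF]
    fun_prop
  -- lintegral condition
  have hlint : (∑' i : ℕ, ∫⁻ x in Set.Ioc (0:ℝ) z, ‖F i x‖₊) ≠ ⊤ := by
    have heq : ∀ i : ℕ, (∫⁻ x in Set.Ioc (0:ℝ) z, ‖F i x‖₊)
        = ENNReal.ofReal (∫ x in Set.Ioc (0:ℝ) z, |F i x|) := by
      intro i
      simp_rw [← enorm_eq_nnnorm]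
      rw [← ofReal_integral_norm_eq_lintegral_enorm (hFi_int i)]
      congr 1
    have hle : (∑' i : ℕ, ∫⁻ x in Set.Ioc (0:ℝ) z, ‖F i x‖₊)
        ≤ ENNReal.ofReal (∑' i : ℕ, (θ * β * (β^s)⁻¹ * Γ0) * (|coef i| / ((i:ℝ)+1))) := by
      rw [ENNReal.ofReal_tsum_of_nonneg (fun i => by positivity) hmaj2]
      apply ENNReal.tsum_le_tsum
      intro i
      rw [heq i]
      exact ENNReal.ofReal_le_ofReal (hbound i)
    exact ne_top_of_le_ne_top ENNReal.ofReal_ne_top hle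
  -- main computation
  rw [setIntegral_congr_fun measurableSet_Ioc hpt, integral_tsum hFm hlint]
  apply tsum_congr
  intro i
  rw [hFi_val i]
  have halg : θ * β * (((((i:ℝ)+1) * β))^((r:ℝ)/α + 1))⁻¹
      = θ / (β^((r:ℝ)/α) * ((i:ℝ)+1)^((r:ℝ)/α + 1)) := by
    rw [Real.mul_rpow (by positivity) hβ.le, Real.rpow_add hβ, Real.rpow_one]
    have h1 : (0:ℝ) < ((i:ℝ)+1)^((r:ℝ)/α + 1) := rpow_pos_of_pos (by positivity) _
    have h2 : (0:ℝ) < β^((r:ℝ)/α) := rpow_pos_of_pos hβ _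
    field_simp
  rw [hcoef]
  simp only
  linear_combination ((-1:ℝ)^i *
    ((1 + lam) * genChoose (θ - 1) i - 2 * lam * genChoose (2 * θ - 1) i) *
    (∫ t in Set.Ioc (0:ℝ) ((((i:ℝ)+1) * β) * z^α), t^((r:ℝ)/α) * Real.exp (-t))) * halg
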